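/- Let γ₀, γ₁ ≠ 0 and s > 0. The complex numbers q₊(s) and q₋(s) defined by q±(s) = -(√(s²+(γ₀+γ₁)²) ± √(s²+(γ₀-γ₁)²))²/(4γ₀γ₁) are the two eigenvalues of the 2×2 complex matrix M₁M₀, where M₀ = [[is/γ₁, -γ₀/γ₁],[1,0]] and M₁ = [[is/γ₀, -γ₁/γ₀],[1,0]] (i the imaginary unit); equivalently, the characteristic polynomial of M₁M₀ equals (X - q₊(s))(X - q₋(s)). -/

import Mathlib

open Polynomial in
theorem charpoly_fin_two_aux (M : Matrix (Fin 2) (Fin 2) ℂ) :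
    M.charpoly = X ^ 2 - C M.trace * X + C M.det := by
  rw [Matrix.charpoly, Matrix.det_fin_two, Matrix.charmatrix_apply_eq,
    Matrix.charmatrix_apply_eq, Matrix.charmatrix_apply_ne _ _ _ (by decide),
    Matrix.charmatrix_apply_ne _ _ _ (by decide), Matrix.trace_fin_two, Matrix.det_fin_two]
  simp only [map_sub, map_mul, map_add]
  ring

open Polynomial in
theorem charpoly_transfer_matrix (γ₀ γ₁ s : ℝ) (h₀ : γ₀ ≠ 0) (h₁ : γ₁ ≠ 0) (hs : 0 < s)
    (M₀ M₁ : Matrix (Fin 2) (Fin 2) ℂ)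
    (hM₀ : M₀ = !![Complex.I * s / γ₁, -(γ₀ / γ₁ : ℝ); 1, 0])
    (hM₁ : M₁ = !![Complex.I * s / γ₀, -(γ₁ / γ₀ : ℝ); 1, 0])
    (qp qm : ℝ)
    (hqp : qp = -((Real.sqrt (s^2 + (γ₀ + γ₁)^2) + Real.sqrt (s^2 + (γ₀ - γ₁)^2))^2 / (4 * γ₀ * γ₁)))
    (hqm : qm = -((Real.sqrt (s^2 + (γ₀ + γ₁)^2) - Real.sqrt (s^2 + (γ₀ - γ₁)^2))^2 / (4 * γ₀ * γ₁))) :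
    (M₁ * M₀).charpoly = (X - C (qp : ℂ)) * (X - C (qm : ℂ)) := by
  set A := Real.sqrt (s^2 + (γ₀ + γ₁)^2) with hA
  set B := Real.sqrt (s^2 + (γ₀ - γ₁)^2) with hB
  have hA2 : A^2 = s^2 + (γ₀ + γ₁)^2 := Real.sq_sqrt (by positivity)
  have hB2 : B^2 = s^2 + (γ₀ - γ₁)^2 := Real.sq_sqrt (by positivity)
  have hsum : qp + qm = -((s^2 + γ₀^2 + γ₁^2) / (γ₀ * γ₁)) := by
    rw [hqp, hqm]
    field_simp
    linear_combination (-2) * hA2 + (-2) * hB2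
  have hprod : qp * qm = 1 := by
    rw [hqp, hqm]
    field_simp
    linear_combination (A^2 - B^2 + 4*γ₀*γ₁) * hA2 - (A^2 - B^2 + 4*γ₀*γ₁) * hB2
  have h₀' : (γ₀ : ℂ) ≠ 0 := by exact_mod_cast h₀
  have h₁' : (γ₁ : ℂ) ≠ 0 := by exact_mod_cast h₁
  have t1 : (M₁ * M₀).trace = (qp : ℂ) + (qm : ℂ) := by
    subst hM₀ hM₁
    have : ((qp : ℂ) + qm) = ((qp + qm : ℝ) : ℂ) := by push_cast; ring
    rw [this, hsum]
    simp [Matrix.trace_fin_two, Matrix.mul_apply, Fin.sum_univ_two]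
    field_simp
    ring_nf
    simp [Complex.I_sq]
  have t2 : (M₁ * M₀).det = (qp : ℂ) * (qm : ℂ) := by
    subst hM₀ hM₁
    have : ((qp : ℂ) * qm) = ((qp * qm : ℝ) : ℂ) := by push_cast; ring
    rw [this, hprod]
    rw [Matrix.det_mul]
    simp [Matrix.det_fin_two]
    field_simp
  rw [charpoly_fin_two_aux, t1, t2]
  simp only [map_add, map_mul]
  ring
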